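/- Explicitly, the Gaussian curvature above satisfies κ(t) = 4a² (1 − ζ(t)⁴) / (1 + (4a²+2)ζ(t)² + ζ(t)⁴)² for all t ≥ 0. -/

import Mathlib

/-- for `ψ(s) = a log(1+s²)`, `a > 0`, the radial curvature satisfies
`κ(t) = 4a²(1 - ζ(t)⁴) / (1 + (4a²+2)ζ(t)² + ζ(t)⁴)²` for all `t ≥ 0`,
with the convention `κ(0) = 4a²`. -/
theorem stmt_19 (a : ℝ) (ha : 0 < a)
    (ψ : ℝ → ℝ) (hψ : ∀ s, ψ s = a * Real.log (1 + s ^ 2))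
    (ζ : ℝ → ℝ) (hζnn : ∀ t ≥ (0:ℝ), 0 ≤ ζ t)
    (hζ : ∀ t ≥ (0:ℝ), t = ∫ s in (0:ℝ)..(ζ t), Real.sqrt (1 + deriv ψ s ^ 2))
    (κ : ℝ → ℝ)
    (hκ : ∀ t > (0:ℝ), κ t = deriv ψ (ζ t) * deriv (deriv ψ) (ζ t) /
      (ζ t * (1 + deriv ψ (ζ t) ^ 2) ^ 2))
    (hκ0 : κ 0 = 4 * a ^ 2) :
    ∀ t ≥ (0:ℝ), κ t = 4 * a ^ 2 * (1 - ζ t ^ 4) /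
      (1 + (4 * a ^ 2 + 2) * ζ t ^ 2 + ζ t ^ 4) ^ 2 := by
  have hψfun : ψ = fun s => a * Real.log (1 + s ^ 2) := funext hψ
  have hpos : ∀ s : ℝ, (0:ℝ) < 1 + s ^ 2 := fun s => by positivity
  have hd1 : ∀ s : ℝ, HasDerivAt ψ (2 * a * s / (1 + s ^ 2)) s := by
    intro s
    rw [hψfun]
    have h1 : HasDerivAt (fun s : ℝ => 1 + s ^ 2) (2 * s) s := by
      simpa using (hasDerivAt_pow 2 s).const_add 1
    have h2 := (Real.hasDerivAt_log (hpos s).ne').comp s h1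
    have h3 := h2.const_mul a
    refine h3.congr_deriv ?_
    field_simp
  have hderiv1 : ∀ s, deriv ψ s = 2 * a * s / (1 + s ^ 2) := fun s => (hd1 s).deriv
  have hgfun : deriv ψ = fun s => 2 * a * s / (1 + s ^ 2) := funext hderiv1
  have hd2 : ∀ s : ℝ, HasDerivAt (deriv ψ) (2 * a * (1 - s ^ 2) / (1 + s ^ 2) ^ 2) s := by
    intro s
    rw [hgfun]
    have hnum : HasDerivAt (fun s : ℝ => 2 * a * s) (2 * a) s := by
      simpa using (hasDerivAt_id s).const_mul (2 * a)
    have hden : HasDerivAt (fun s : ℝ => 1 + s ^ 2) (2 * s) s := by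
      simpa using (hasDerivAt_pow 2 s).const_add 1
    have h := hnum.div hden (hpos s).ne'
    refine h.congr_deriv ?_
    field_simp
    ring
  have hderiv2 : ∀ s, deriv (deriv ψ) s = 2 * a * (1 - s ^ 2) / (1 + s ^ 2) ^ 2 :=
    fun s => (hd2 s).deriv
  have hcont : Continuous fun s => Real.sqrt (1 + deriv ψ s ^ 2) := by
    rw [hgfun]
    have hc : Continuous fun s : ℝ => 2 * a * s / (1 + s ^ 2) :=
      Continuous.div (continuous_const.mul continuous_id)
        (continuous_const.add (continuous_pow 2)) (fun s => (hpos s).ne')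
    exact (continuous_const.add (hc.pow 2)).sqrt
  have key : ∀ t ≥ (0:ℝ), ζ t ≤ t := by
    intro t ht
    have h := hζ t ht
    have hnn := hζnn t ht
    calc ζ t = ∫ s in (0:ℝ)..(ζ t), (1:ℝ) := by simp
    _ ≤ ∫ s in (0:ℝ)..(ζ t), Real.sqrt (1 + deriv ψ s ^ 2) := by
        apply intervalIntegral.integral_mono_on hnn intervalIntegrable_const
          (hcont.intervalIntegrable _ _)
        intro x _
        nlinarith [Real.sq_sqrt (show (0:ℝ) ≤ 1 + deriv ψ x ^ 2 by positivity),
          Real.sqrt_nonneg (1 + deriv ψ x ^ 2)]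
    _ = t := h.symm
  intro t ht
  rcases eq_or_lt_of_le ht with h0 | htpos
  · have hz0 : ζ 0 = 0 := le_antisymm (by simpa using key 0 le_rfl) (hζnn 0 le_rfl)
    rw [← h0, hz0, hκ0]
    norm_num
  · have hznn := hζnn t ht
    have hzpos : 0 < ζ t := by
      rcases hznn.lt_or_eq with h | h
      · exact h
      · exfalso
        have := hζ t ht
        rw [← h] at this
        simp at this
        linarith
    rw [hκ t htpos, hderiv1, hderiv2]
    have hzp := hpos (ζ t)
    have hD : (0:ℝ) < 1 + (4 * a ^ 2 + 2) * ζ t ^ 2 + ζ t ^ 4 := by positivity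
    field_simp
    ring
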